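/- Let h > 0, k ∈ ℤ₊, L = kh, and let u be a C¹ solution of u_t + (u(x+h,t) - u(x-h,t))u_x = 0 that is L-periodic in x and satisfies u(mh,0) = 0 for all integers m. Then u(mh,t) = 0 for all t ≥ 0 and all integers m. -/

import Mathlib

open Set Function
open scoped NNReal


/-- For a `C¹`, `kh`-periodic (in `x`) solution of the minus-sign nonlocal Burgers
equation vanishing at all lattice points `mh` at time `0`, the solution vanishes at
all lattice points for all `t ≥ 0`. -/
theorem stmt_18 (h : ℝ) (hh : 0 < h) (k : ℤ) (hk : 0 < k)
    (u ut ux : ℝ → ℝ → ℝ)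
    (hC1 : ContDiff ℝ 1 (fun p : ℝ × ℝ => u p.1 p.2))
    (hut : ∀ x t : ℝ, HasDerivAt (fun s => u x s) (ut x t) t)
    (hux : ∀ x t : ℝ, HasDerivAt (fun y => u y t) (ux x t) x)
    (hper : ∀ x t : ℝ, u (x + k * h) t = u x t)
    (hpde : ∀ x t : ℝ, ut x t + (u (x + h) t - u (x - h) t) * ux x t = 0)
    (hinit : ∀ m : ℤ, u (m * h) 0 = 0) :
    ∀ m : ℤ, ∀ t : ℝ, 0 ≤ t → u (m * h) t = 0 := by
  set U : ℝ × ℝ → ℝ := fun p => u p.1 p.2 with hUdef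
  -- `ux` is the partial derivative, hence continuous in `t`
  have hux_eq : ∀ x t : ℝ, ux x t = fderiv ℝ U (x, t) (1, 0) := by
    intro x t
    have hd : HasFDerivAt U (fderiv ℝ U (x, t)) (x, t) :=
      (hC1.differentiable one_ne_zero (x, t)).hasFDerivAt
    have hg : HasDerivAt (fun y : ℝ => ((y, t) : ℝ × ℝ)) ((1 : ℝ), (0 : ℝ)) x :=
      (hasDerivAt_id x).prodMk (hasDerivAt_const x t)
    exact (hux x t).unique (by have := hd.comp_hasDerivAt x hg; exact this)
  have hux_cont : ∀ x : ℝ, Continuous fun t => ux x t := by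
    intro x
    have hc : Continuous fun t : ℝ => fderiv ℝ U (x, t) (1, 0) :=
      ((hC1.continuous_fderiv one_ne_zero).comp
        (continuous_const.prodMk continuous_id)).clm_apply continuous_const
    refine hc.congr fun t => ?_
    rw [hux_eq x t]
  have hucont : Continuous U := hC1.continuous
  -- lattice values only depend on the residue mod k
  have hmod : ∀ (a b : ℤ) (t : ℝ), a % k = b % k → u (a * h) t = u (b * h) t := by
    intro a b t hab
    obtain ⟨j, hj⟩ := Int.ModEq.dvd (hab : Int.ModEq k a b)  -- k ∣ b - a
    have P : Function.Periodic (fun x => u x t) (k * h) := fun x => hper x t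
    have hEq : (a : ℝ) * h = (b : ℝ) * h + (-j : ℤ) * ((k : ℝ) * h) := by
      have hab' : a = b - k * j := by omega
      rw [hab']; push_cast; ring
    calc u ((a : ℝ) * h) t = u ((b : ℝ) * h + ((-j : ℤ) : ℝ) * ((k : ℝ) * h)) t := by
          rw [hEq]
      _ = u ((b : ℝ) * h) t := P.int_mul (-j) ((b : ℝ) * h)
  set n : ℕ := k.toNat with hndef
  have hnk : (n : ℤ) = k := Int.toNat_of_nonneg hk.le
  have hn : 0 < n := by omega
  haveI : NeZero n := ⟨hn.ne'⟩
  set w : ℝ → Fin n → ℝ := fun t i => u ((i : ℕ) * h) t with hwdef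
  have hcast : ∀ i : Fin n, (((i : ℕ) : ℤ) : ℝ) = ((i : ℕ) : ℝ) := by intro i; push_cast; ring
  -- neighbours
  have hplus : ∀ (i : Fin n) (t : ℝ), w t (i + 1) = u (((i : ℕ) : ℝ) * h + h) t := by
    intro i t
    have h1 : ((((i + 1 : Fin n) : ℕ) : ℤ)) % k = (((i : ℕ) : ℤ) + 1) % k := by
      have e1 : (((i + 1 : Fin n) : ℕ) : ℤ) = (((i : ℕ) : ℤ) + (((1 : Fin n) : ℕ) : ℤ)) % n := by
        rw [Fin.val_add]; push_cast [Int.natCast_mod]; ring_nf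
      have e2 : (((1 : Fin n) : ℕ) : ℤ) = 1 % (n : ℤ) := by
        rw [Fin.val_one']; push_cast [Int.natCast_mod]; ring_nf
      rw [e1, e2, hnk]
      have : ((i : ℕ) : ℤ) + 1 % k ≡ ((i : ℕ) : ℤ) + 1 [ZMOD k] :=
        Int.ModEq.add_left _ (Int.emod_emod_of_dvd 1 dvd_rfl)
      calc (((i : ℕ) : ℤ) + 1 % k) % k % k = (((i : ℕ) : ℤ) + 1 % k) % k :=
            Int.emod_emod_of_dvd _ dvd_rfl
        _ = (((i : ℕ) : ℤ) + 1) % k := this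
    show u ((((i + 1 : Fin n) : ℕ) : ℝ) * h) t = u (((i : ℕ) : ℝ) * h + h) t
    have e1 : ((((i + 1 : Fin n) : ℕ)) : ℝ) * h = (((((i + 1 : Fin n) : ℕ)) : ℤ) : ℝ) * h := by
      push_cast; ring
    have e2 : (((i : ℕ)) : ℝ) * h + h = ((((((i : ℕ)) : ℤ) + 1) : ℤ) : ℝ) * h := by
      push_cast; ring
    rw [e1, e2]
    exact hmod _ _ t h1
  have hminus : ∀ (i : Fin n) (t : ℝ), w t (i - 1) = u (((i : ℕ) : ℝ) * h - h) t := by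
    intro i t
    have h1 : ((((i - 1 : Fin n) : ℕ) : ℤ)) % k = (((i : ℕ) : ℤ) - 1) % k := by
      have e1 : (((i - 1 : Fin n) : ℕ) : ℤ) = (((i : ℕ) : ℤ) - (((1 : Fin n) : ℕ) : ℤ)) % n := by
        exact_mod_cast Fin.coe_int_sub_eq_mod i 1
      have e2 : (((1 : Fin n) : ℕ) : ℤ) = 1 % (n : ℤ) := by
        rw [Fin.val_one']; push_cast [Int.natCast_mod]; ring_nf
      rw [e1, e2, hnk]
      have : ((i : ℕ) : ℤ) - 1 % k ≡ ((i : ℕ) : ℤ) - 1 [ZMOD k] :=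
        Int.ModEq.sub_left _ (Int.emod_emod_of_dvd 1 dvd_rfl)
      calc (((i : ℕ) : ℤ) - 1 % k) % k % k = (((i : ℕ) : ℤ) - 1 % k) % k :=
            Int.emod_emod_of_dvd _ dvd_rfl
        _ = (((i : ℕ) : ℤ) - 1) % k := this
    show u ((((i - 1 : Fin n) : ℕ) : ℝ) * h) t = u (((i : ℕ) : ℝ) * h - h) t
    have e1 : ((((i - 1 : Fin n) : ℕ)) : ℝ) * h = (((((i - 1 : Fin n) : ℕ)) : ℤ) : ℝ) * h := by
      push_cast; ring
    have e2 : (((i : ℕ)) : ℝ) * h - h = ((((((i : ℕ)) : ℤ) - 1) : ℤ) : ℝ) * h := by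
      push_cast; ring
    rw [e1, e2]
    exact hmod _ _ t h1
  -- initial condition
  have hw0 : w 0 = fun _ => (0 : ℝ) := by
    funext i
    have := hinit ((i : ℕ) : ℤ)
    rw [hcast i] at this
    exact this
  -- main loop
  intro m t ht
  set T := t with hT
  -- bound on the coefficients
  haveI : Nonempty (Fin n) := ⟨⟨0, hn⟩⟩
  have hbd : ∀ i : Fin n, ∃ Ci : ℝ, ∀ s ∈ Icc (0 : ℝ) T, ‖ux (((i : ℕ) : ℝ) * h) s‖ ≤ Ci := by
    intro i
    exact isCompact_Icc.exists_bound_of_continuousOn (hux_cont _).continuousOn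
  choose Cf hCf using hbd
  set C : ℝ := Finset.univ.sup' Finset.univ_nonempty Cf with hCdef
  have hC : ∀ (i : Fin n), ∀ s ∈ Icc (0 : ℝ) T, |ux (((i : ℕ) : ℝ) * h) s| ≤ C := by
    intro i s hs
    exact (hCf i s hs).trans (Finset.le_sup' Cf (Finset.mem_univ i))
  have hC0 : 0 ≤ C :=
    le_trans (abs_nonneg _) (hC ⟨0, hn⟩ 0 ⟨le_refl 0, ht⟩)
  -- clamped time
  set θ : ℝ → ℝ := fun s => min (max s 0) T with hθdef
  have hθmem : ∀ s, θ s ∈ Icc (0 : ℝ) T := by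
    intro s
    constructor
    · exact le_min (le_max_right _ _) ht
    · exact min_le_right _ _
  have hθeq : ∀ s ∈ Icc (0 : ℝ) T, θ s = s := by
    intro s hs
    simp only [hθdef]
    rw [max_eq_left hs.1, min_eq_left hs.2]
  set v : ℝ → (Fin n → ℝ) → (Fin n → ℝ) :=
    fun s y i => (y (i - 1) - y (i + 1)) * ux (((i : ℕ) : ℝ) * h) (θ s) with hvdef
  set K : ℝ≥0 := ⟨2 * C, by positivity⟩ with hKdef
  have hvlip : ∀ s, LipschitzWith K (v s) := by
    intro s
    apply LipschitzWith.of_dist_le_mul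
    intro y z
    have hKr : (K : ℝ) = 2 * C := rfl
    rw [dist_pi_le_iff (by positivity)]
    intro i
    have hc := hC i (θ s) (hθmem s)
    have hd1 : |y (i - 1) - z (i - 1)| ≤ dist y z := by
      rw [← Real.dist_eq]; exact dist_le_pi_dist y z (i - 1)
    have hd2 : |y (i + 1) - z (i + 1)| ≤ dist y z := by
      rw [← Real.dist_eq]; exact dist_le_pi_dist y z (i + 1)
    have : dist (v s y i) (v s z i)
        = |(y (i - 1) - z (i - 1)) - (y (i + 1) - z (i + 1))| * |ux (((i : ℕ) : ℝ) * h) (θ s)| := by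
      rw [Real.dist_eq, hvdef]
      rw [← abs_mul]
      ring_nf
    rw [this, hKr]
    calc |(y (i - 1) - z (i - 1)) - (y (i + 1) - z (i + 1))| * |ux (((i : ℕ) : ℝ) * h) (θ s)|
        ≤ (|y (i - 1) - z (i - 1)| + |y (i + 1) - z (i + 1)|) * C := by
          apply mul_le_mul (abs_sub _ _) hc (abs_nonneg _)
          positivity
      _ ≤ (dist y z + dist y z) * C := by
          apply mul_le_mul_of_nonneg_right (add_le_add hd1 hd2) hC0
      _ = 2 * C * dist y z := by ring
  -- w is continuous
  have hwcont : Continuous w := by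
    apply continuous_pi
    intro i
    exact hucont.comp (continuous_const.prodMk continuous_id)
  -- w solves the ODE
  have hwderiv : ∀ s ∈ Ico (0 : ℝ) T, HasDerivWithinAt w (v s (w s)) (Ici s) s := by
    intro s hs
    have hθs : θ s = s := hθeq s ⟨hs.1, hs.2.le⟩
    apply HasDerivAt.hasDerivWithinAt
    rw [hasDerivAt_pi]
    intro i
    set x : ℝ := ((i : ℕ) : ℝ) * h with hxdef
    have hval : v s (w s) i = ut x s := by
      rw [hvdef]
      simp only
      rw [hθs, hminus i s, hplus i s]
      have := hpde x s
      have hxm : x - h = ((i : ℕ) : ℝ) * h - h := rfl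
      have hxp : x + h = ((i : ℕ) : ℝ) * h + h := rfl
      nlinarith [hpde x s]
    rw [hval]
    exact hut x s
  -- 0 solves the ODE
  have hzder : ∀ s ∈ Ico (0 : ℝ) T,
      HasDerivWithinAt (fun _ : ℝ => (fun _ : Fin n => (0 : ℝ))) (v s (fun _ => 0)) (Ici s) s := by
    intro s _
    have : v s (fun _ => 0) = fun _ => (0 : ℝ) := by
      funext i; simp [hvdef]
    rw [this]
    exact (hasDerivWithinAt_const s _ _)
  have huniq := ODE_solution_unique hvlip (hwcont.continuousOn) hwderiv
    (continuous_const.continuousOn) hzder (by rw [hw0])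
  have hwt : w t = fun _ => 0 := huniq ⟨ht, le_refl t⟩
  -- conclude
  have hmk : (0 : ℤ) ≤ m % k := Int.emod_nonneg m hk.ne'
  have hmklt : m % k < k := Int.emod_lt_of_pos m hk
  have hlt : (m % k).toNat < n := by omega
  set i : Fin n := ⟨(m % k).toNat, hlt⟩ with hidef
  have hival : ((i : ℕ) : ℤ) = m % k := by
    simp [hidef]; omega
  have h1 : u ((m : ℝ) * h) t = u ((((i : ℕ) : ℤ) : ℝ) * h) t := by
    apply hmod
    rw [hival]
    exact (Int.emod_emod_of_dvd m dvd_rfl).symm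
  rw [h1, hcast i]
  have := congrFun hwt i
  exact this
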